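/- Let K > 1 and N < 2K, and let B be an N×K matrix whose entries are i.i.d. random variables drawn from a distribution absolutely continuous with respect to Lebesgue measure. Then with probability 1 there exist an N×N permutation matrix Π and vectors x, x̂ ∈ R^K with x ≠ x̂ such that B x = Π B x̂. -/

import Mathlib

open MeasureTheory ProbabilityTheory Matrix

/-- Evaluation of a multivariate polynomial is measurable in the point. -/
private lemma measurable_mv_eval {ι : Type*} (p : MvPolynomial ι ℝ) :
    Measurable fun v : ι → ℝ => MvPolynomial.eval v p := by
  induction p using MvPolynomial.induction_on with
  | C a => simpa [MvPolynomial.eval_C] using (measurable_const : Measurable fun _ : ι → ℝ => a)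
  | add p q hp hq => simpa [_root_.map_add, Pi.add_def] using hp.add hq
  | mul_X p i hp => simpa [_root_.map_mul, MvPolynomial.eval_X, Pi.mul_def] using hp.mul (measurable_pi_apply i)

/-- The zero set of a nonzero multivariate polynomial is null for a product of
absolutely continuous probability measures on `ℝ` (index `Fin n`). -/
private lemma pi_null_of_ne_zero (μ : Measure ℝ) [IsProbabilityMeasure μ] (hac : μ ≪ volume) :
    ∀ (n : ℕ) (p : MvPolynomial (Fin n) ℝ), p ≠ 0 →
      Measure.pi (fun _ : Fin n => μ) {v | MvPolynomial.eval v p = 0} = 0 := by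
  intro n
  induction n with
  | zero =>
    intro p hp
    obtain ⟨c, rfl⟩ := MvPolynomial.C_surjective (Fin 0) p
    have hc : c ≠ 0 := fun h => hp (by simp [h])
    have hempty : {v : Fin 0 → ℝ | MvPolynomial.eval v (MvPolynomial.C c) = 0} = ∅ := by
      ext v; simp [MvPolynomial.eval_C, hc]
    rw [hempty]
    simp
  | succ n ih =>
    intro p hp
    set q : Polynomial (MvPolynomial (Fin n) ℝ) := MvPolynomial.finSuccEquiv ℝ n p with hqdef
    have hq0 : q ≠ 0 := by
      intro h
      apply hp
      have := congrArg (MvPolynomial.finSuccEquiv ℝ n).symm h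
      simpa [hqdef] using this
    have hex : ∃ i, q.coeff i ≠ 0 := by
      by_contra h
      push_neg at h
      exact hq0 (Polynomial.ext fun i => by simpa using h i)
    obtain ⟨i₀, hi₀⟩ := hex
    obtain ⟨m₀, hm₀⟩ := MvPolynomial.ne_zero_iff.mp hi₀
    -- the univariate polynomial detecting vanishing of `Polynomial.eval (C y) q`
    set G : Polynomial ℝ :=
      ∑ i ∈ q.support, Polynomial.C (MvPolynomial.coeff m₀ (q.coeff i)) * Polynomial.X ^ i
      with hGdef
    have hGi₀ : G.coeff i₀ = MvPolynomial.coeff m₀ (q.coeff i₀) := by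
      rw [hGdef, Polynomial.finset_sum_coeff]
      simp only [Polynomial.coeff_C_mul, Polynomial.coeff_X_pow, mul_ite, mul_one, mul_zero]
      rw [Finset.sum_ite_eq q.support i₀ fun i => MvPolynomial.coeff m₀ (q.coeff i)]
      simp [Polynomial.mem_support_iff.mpr hi₀]
    have hG0 : G ≠ 0 := fun h => hm₀ (by rw [← hGi₀, h, Polynomial.coeff_zero])
    have hr : ∀ y : ℝ, Polynomial.eval (MvPolynomial.C y) q = 0 → Polynomial.eval y G = 0 := by
      intro y hy
      have h1 : MvPolynomial.coeff m₀ (Polynomial.eval (MvPolynomial.C y) q)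
          = Polynomial.eval y G := by
        rw [Polynomial.eval_eq_sum, Polynomial.sum_def, MvPolynomial.coeff_sum, hGdef,
          Polynomial.eval_finset_sum]
        refine Finset.sum_congr rfl fun i _ => ?_
        rw [show (MvPolynomial.C y : MvPolynomial (Fin n) ℝ) ^ i
            = MvPolynomial.C (y ^ i) from (map_pow _ _ _).symm]
        rw [mul_comm (q.coeff i), MvPolynomial.coeff_C_mul, Polynomial.eval_mul,
          Polynomial.eval_C, Polynomial.eval_pow, Polynomial.eval_X, mul_comm]
      rw [hy] at h1
      simpa using h1.symm
    have hbadfin : {y : ℝ | Polynomial.eval (MvPolynomial.C y) q = 0}.Finite :=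
      (Polynomial.finite_setOf_isRoot hG0).subset fun y hy => hr y hy
    -- measure-preserving cons map
    have hcons_meas : Measurable
        fun yz : ℝ × (Fin n → ℝ) => (Fin.cons yz.1 yz.2 : Fin (n + 1) → ℝ) := by
      refine measurable_pi_lambda _ fun i => ?_
      refine Fin.cases ?_ (fun j => ?_) i
      · simpa using measurable_fst
      · simpa [Function.comp_def] using (measurable_pi_apply j).comp measurable_snd
    have hmp : MeasurePreserving
        (fun yz : ℝ × (Fin n → ℝ) => (Fin.cons yz.1 yz.2 : Fin (n + 1) → ℝ))
        (μ.prod (Measure.pi fun _ : Fin n => μ)) (Measure.pi fun _ : Fin (n + 1) => μ) := by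
      refine ⟨hcons_meas, (Measure.pi_eq fun s hs => ?_).symm⟩
      rw [Measure.map_apply hcons_meas (MeasurableSet.univ_pi hs)]
      have hpre : (fun yz : ℝ × (Fin n → ℝ) => (Fin.cons yz.1 yz.2 : Fin (n + 1) → ℝ)) ⁻¹'
          Set.univ.pi s = (s 0) ×ˢ Set.univ.pi (fun j : Fin n => s j.succ) := by
        ext ⟨y, z⟩
        simp [Set.mem_univ_pi, Fin.forall_fin_succ]
      rw [hpre, Measure.prod_prod, Measure.pi_pi, Fin.prod_univ_succ]
    have hSmeas : MeasurableSet {v : Fin (n + 1) → ℝ | MvPolynomial.eval v p = 0} :=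
      measurable_mv_eval p (measurableSet_singleton 0)
    rw [← hmp.map_eq, Measure.map_apply hcons_meas hSmeas]
    have hTmeas : MeasurableSet
        ((fun yz : ℝ × (Fin n → ℝ) => (Fin.cons yz.1 yz.2 : Fin (n + 1) → ℝ)) ⁻¹'
          {v | MvPolynomial.eval v p = 0}) := hcons_meas hSmeas
    rw [Measure.measure_prod_null hTmeas]
    have hbadnull : μ {y : ℝ | Polynomial.eval (MvPolynomial.C y) q = 0} = 0 :=
      hac (hbadfin.countable.measure_zero _)
    filter_upwards [measure_eq_zero_iff_ae_notMem.mp hbadnull] with y hy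
    have hy' : Polynomial.eval (MvPolynomial.C y) q ≠ 0 := by simpa using hy
    have hval : ∀ z : Fin n → ℝ, MvPolynomial.eval (Fin.cons y z) p
        = MvPolynomial.eval z (Polynomial.eval (MvPolynomial.C y) q) := by
      intro z
      rw [MvPolynomial.eval_eq_eval_mv_eval' z y p, Polynomial.eval_map, ← hqdef]
      show Polynomial.eval₂ (MvPolynomial.eval z) y q
        = MvPolynomial.eval z (Polynomial.eval₂ (RingHom.id _) (MvPolynomial.C y) q)
      rw [Polynomial.hom_eval₂]
      simp
    have hsec : (Prod.mk y ⁻¹'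
        ((fun yz : ℝ × (Fin n → ℝ) => (Fin.cons yz.1 yz.2 : Fin (n + 1) → ℝ)) ⁻¹'
          {v | MvPolynomial.eval v p = 0}))
        = {z : Fin n → ℝ | MvPolynomial.eval z (Polynomial.eval (MvPolynomial.C y) q) = 0} := by
      ext z
      simp only [Set.mem_preimage, Set.mem_setOf_eq, hval z]
    show Measure.pi (fun _ : Fin n => μ) _ = 0
    rw [hsec]
    exact ih _ hy'

/-- The zero set of a nonzero multivariate polynomial over an arbitrary finite index type
is null for the corresponding product measure. -/
private lemma pi_null_of_ne_zero' {ι : Type*} [Fintype ι] (μ : Measure ℝ)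
    [IsProbabilityMeasure μ] (hac : μ ≪ volume) (p : MvPolynomial ι ℝ) (hp : p ≠ 0) :
    Measure.pi (fun _ : ι => μ) {v | MvPolynomial.eval v p = 0} = 0 := by
  classical
  set n := Fintype.card ι
  set e : ι ≃ Fin n := Fintype.equivFin ι with hedef
  set F : (Fin n → ℝ) → (ι → ℝ) := fun g q => g (e q) with hFdef
  have hFmeas : Measurable F := measurable_pi_lambda _ fun q => measurable_pi_apply _
  have hmp : MeasurePreserving F (Measure.pi fun _ : Fin n => μ) (Measure.pi fun _ : ι => μ) := by
    refine ⟨hFmeas, (Measure.pi_eq fun s hs => ?_).symm⟩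
    rw [Measure.map_apply hFmeas (MeasurableSet.univ_pi hs)]
    have hpre : F ⁻¹' Set.univ.pi s = Set.univ.pi fun j : Fin n => s (e.symm j) := by
      ext g
      simp only [Set.mem_preimage, Set.mem_univ_pi, hFdef]
      constructor
      · intro h j; simpa using h (e.symm j)
      · intro h q; simpa using h (e q)
    rw [hpre, Measure.pi_pi]
    exact Equiv.prod_comp e.symm fun q => μ (s q)
  have hSmeas : MeasurableSet {v : ι → ℝ | MvPolynomial.eval v p = 0} :=
    measurable_mv_eval p (measurableSet_singleton 0)
  rw [← hmp.map_eq, Measure.map_apply hFmeas hSmeas]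
  have hpre : F ⁻¹' {v : ι → ℝ | MvPolynomial.eval v p = 0}
      = {g : Fin n → ℝ | MvPolynomial.eval g (MvPolynomial.rename e p) = 0} := by
    ext g
    simp only [Set.mem_preimage, Set.mem_setOf_eq, MvPolynomial.eval_rename]
    rfl
  rw [hpre]
  refine pi_null_of_ne_zero μ hac n _ fun h => hp ?_
  have := MvPolynomial.rename_injective (R := ℝ) (e : ι → Fin n) e.injective
  exact this (by simpa using h)

/-- Multiplying a vector by a permutation matrix permutes its entries. -/
private lemma permMatrix_mulVec {N : ℕ} (σ : Equiv.Perm (Fin N)) (v : Fin N → ℝ) :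
    (σ.permMatrix ℝ).mulVec v = fun i => v (σ i) := by
  funext i
  simp [Matrix.mulVec, dotProduct, Equiv.Perm.permMatrix, PEquiv.toMatrix_apply,
    Equiv.toPEquiv_apply, Finset.sum_ite_eq]

/-- Converse to the unlabeled sensing theorem: for `K > 1` and `N < 2K`, if the entries of
the `N × K` matrix `B` are i.i.d. from a continuous distribution, then with probability 1
there exist a permutation matrix `Π` and distinct vectors `x ≠ x̂` with `B x = Π (B x̂)`. -/
theorem stmt17 {N K : ℕ} (hK : 1 < K) (hN : N < 2 * K) {Ω : Type*} [MeasurableSpace Ω]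
    (P : Measure Ω) [IsProbabilityMeasure P]
    (B : Ω → Matrix (Fin N) (Fin K) ℝ)
    (hmeas : ∀ i j, Measurable fun ω => B ω i j)
    (hindep : iIndepFun
      (fun (q : Fin N × Fin K) ω => B ω q.1 q.2) P)
    (μ : Measure ℝ) [IsProbabilityMeasure μ] (hac : μ ≪ volume)
    (hid : ∀ i j, P.map (fun ω => B ω i j) = μ) :
    ∀ᵐ ω ∂P, ∃ (σ : Equiv.Perm (Fin N)) (x xhat : Fin K → ℝ), x ≠ xhat ∧
      (B ω).mulVec x = (σ.permMatrix ℝ).mulVec ((B ω).mulVec xhat) := by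
  classical
  -- helper: any kernel vector gives a solution with the identity permutation
  have hker_case : ∀ (A : Matrix (Fin N) (Fin K) ℝ) (v : Fin K → ℝ), v ≠ 0 → A.mulVec v = 0 →
      ∃ (σ : Equiv.Perm (Fin N)) (x xhat : Fin K → ℝ), x ≠ xhat ∧
        A.mulVec x = (σ.permMatrix ℝ).mulVec (A.mulVec xhat) := by
    intro A v hv hAv
    refine ⟨1, v, 0, hv, ?_⟩
    rw [Matrix.mulVec_zero, Matrix.mulVec_zero, hAv]
  rcases lt_trichotomy N K with hNK | hNK | hNK
  · -- deterministic case `N < K` : nontrivial kernel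
    refine Filter.Eventually.of_forall fun ω => ?_
    have hnotinj : ¬ Function.Injective (B ω).mulVecLin := by
      intro hinj
      have := LinearMap.finrank_le_finrank_of_injective hinj
      rw [Module.finrank_fin_fun, Module.finrank_fin_fun] at this
      omega
    rw [Function.not_injective_iff] at hnotinj
    obtain ⟨a, b, hab, hne⟩ := hnotinj
    refine hker_case (B ω) (a - b) (sub_ne_zero.mpr hne) ?_
    have : (B ω).mulVecLin (a - b) = 0 := by rw [map_sub, hab, sub_self]
    simpa [Matrix.mulVecLin_apply] using this
  · -- deterministic case `N = K`
    subst hNK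
    refine Filter.Eventually.of_forall fun ω => ?_
    by_cases hdet : (B ω).det = 0
    · obtain ⟨v, hv, hAv⟩ := (Matrix.exists_mulVec_eq_zero_iff).mpr hdet
      exact hker_case (B ω) v hv hAv
    · -- B invertible: use a transposition
      have hunit : IsUnit (B ω).det := isUnit_iff_ne_zero.mpr hdet
      set a : Fin N := ⟨0, by omega⟩
      set b : Fin N := ⟨1, by omega⟩
      have hab : a ≠ b := by simp [a, b, Fin.ext_iff]
      set σ : Equiv.Perm (Fin N) := Equiv.swap a b
      set v : Fin N → ℝ := fun i => if i = a then 1 else 0 with hvdef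
      have hBC : ∀ w : Fin N → ℝ, (B ω).mulVec ((B ω)⁻¹.mulVec w) = w := by
        intro w
        rw [Matrix.mulVec_mulVec, Matrix.mul_nonsing_inv _ hunit, Matrix.one_mulVec]
      refine ⟨σ, (B ω)⁻¹.mulVec (fun i => v (σ i)), (B ω)⁻¹.mulVec v, ?_, ?_⟩
      · intro h
        have := congrArg (fun w => (B ω).mulVec w) h
        simp only [hBC] at this
        have h0 := congrFun this a
        have hσa : σ a = b := Equiv.swap_apply_left a b
        rw [hσa] at h0
        simp [hvdef, hab.symm] at h0
      · rw [hBC, hBC, _root_.permMatrix_mulVec]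
  · -- probabilistic case `K < N`
    -- the bad event: the all-ones vector is in the column span of `B`
    have hKN : K + 1 ≤ N := hNK
    set ι := Fin N × Fin K
    set Y : Ω → (ι → ℝ) := fun ω q => B ω q.1 q.2 with hYdef
    have hY : Measurable Y := measurable_pi_lambda _ fun q => hmeas q.1 q.2
    -- joint law is the product measure
    have hmap : P.map Y = Measure.pi (fun _ : ι => μ) := by
      refine (Measure.pi_eq fun s hs => ?_).symm
      rw [Measure.map_apply hY (MeasurableSet.univ_pi hs)]
      have hpre : Y ⁻¹' Set.univ.pi s = ⋂ q : ι, (fun ω => B ω q.1 q.2) ⁻¹' s q := by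
        ext ω
        simp [hYdef, Set.mem_univ_pi]
      rw [hpre]
      have h1 := hindep.measure_inter_preimage_eq_mul Finset.univ (fun q _ => hs q)
      rw [show (⋂ q : ι, (fun ω => B ω q.1 q.2) ⁻¹' s q)
          = ⋂ q ∈ (Finset.univ : Finset ι), (fun ω => B ω q.1 q.2) ⁻¹' s q by simp]
      rw [h1]
      refine Finset.prod_congr rfl fun q _ => ?_
      rw [← hid q.1 q.2, Measure.map_apply (hmeas q.1 q.2) (hs q)]
    -- the determinant polynomial
    set Q : Matrix (Fin (K + 1)) (Fin (K + 1)) (MvPolynomial ι ℝ) :=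
      fun i j => if h : (j : ℕ) < K
        then MvPolynomial.X (Fin.castLE hKN i, ⟨(j : ℕ), h⟩) else 1 with hQdef
    set p : MvPolynomial ι ℝ := Q.det with hpdef
    set Mat : Ω → Matrix (Fin (K + 1)) (Fin (K + 1)) ℝ :=
      fun ω i j => if h : (j : ℕ) < K
        then B ω (Fin.castLE hKN i) ⟨(j : ℕ), h⟩ else 1 with hMatdef
    have heval : ∀ ω, MvPolynomial.eval (Y ω) p = (Mat ω).det := by
      intro ω
      rw [hpdef, RingHom.map_det]
      congr 1
      ext i j
      simp only [RingHom.mapMatrix_apply, Matrix.map_apply]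
      by_cases h : (j : ℕ) < K <;>
        simp [hQdef, hMatdef, h, hYdef]
    -- p is nonzero: evaluate at a diagonal-ones point
    have hpne : p ≠ 0 := by
      intro h0
      set w : ι → ℝ := fun q => if (q.1 : ℕ) = (q.2 : ℕ) then 1 else 0 with hwdef
      have h1 : MvPolynomial.eval w p = 0 := by rw [h0]; simp
      rw [hpdef, RingHom.map_det] at h1
      set M₀ := (MvPolynomial.eval w).mapMatrix Q with hM₀def
      have hBT : M₀.BlockTriangular id := by
        intro i j hij
        have hj : (j : ℕ) < K := by
          have : (j : ℕ) < (i : ℕ) := hij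
          have : (i : ℕ) < K + 1 := i.isLt
          omega
        have hne : (i : ℕ) ≠ (j : ℕ) := Nat.ne_of_gt hij
        rw [hM₀def, RingHom.mapMatrix_apply, Matrix.map_apply]
        simp [hM₀def, hQdef, hj, hwdef, hne, RingHom.mapMatrix_apply, Matrix.map_apply]
      rw [Matrix.det_of_upperTriangular hBT] at h1
      have hdiag : ∀ i : Fin (K + 1), M₀ i i = 1 := by
        intro i
        rw [hM₀def, RingHom.mapMatrix_apply, Matrix.map_apply]
        by_cases h : (i : ℕ) < K <;>
          simp [hM₀def, hQdef, hwdef, h, RingHom.mapMatrix_apply, Matrix.map_apply]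
      rw [Finset.prod_congr rfl (fun i _ => hdiag i)] at h1
      simp at h1
    -- the bad event is null
    have hSmeas : MeasurableSet {v : ι → ℝ | MvPolynomial.eval v p = 0} :=
      measurable_mv_eval p (measurableSet_singleton 0)
    have hdetnull : P {ω | (Mat ω).det = 0} = 0 := by
      have hset : {ω | (Mat ω).det = 0} = Y ⁻¹' {v : ι → ℝ | MvPolynomial.eval v p = 0} := by
        ext ω
        simp [heval ω]
      rw [hset, ← Measure.map_apply hY hSmeas, hmap]
      exact pi_null_of_ne_zero' μ hac p hpne
    have hbadnull : P {ω | ∃ x : Fin K → ℝ, (B ω).mulVec x = fun _ => (1 : ℝ)} = 0 := by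
      refine measure_mono_null ?_ hdetnull
      intro ω hω
      obtain ⟨x, hx⟩ := hω
      rw [Set.mem_setOf_eq, ← Matrix.exists_mulVec_eq_zero_iff]
      set z : Fin (K + 1) → ℝ := fun j => if h : (j : ℕ) < K then x ⟨(j : ℕ), h⟩ else -1
        with hzdef
      refine ⟨z, ?_, ?_⟩
      · intro h
        have := congrFun h (Fin.last K)
        simp [hzdef, Fin.last] at this
      · funext i
        show ∑ j : Fin (K + 1), Mat ω i j * z j = 0
        rw [Fin.sum_univ_castSucc]
        have hterm : ∀ j : Fin K, Mat ω i j.castSucc * z j.castSucc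
            = B ω (Fin.castLE hKN i) j * x j := by
          intro j
          have hj : ((j.castSucc : Fin (K + 1)) : ℕ) < K := by
            simpa using j.isLt
          simp [hMatdef, hzdef, hj, Fin.eta]
        rw [Finset.sum_congr rfl (fun j _ => hterm j)]
        have hlast : Mat ω i (Fin.last K) * z (Fin.last K) = -1 := by
          simp [hMatdef, hzdef, Fin.last]
        rw [hlast]
        have hsum : ∑ j : Fin K, B ω (Fin.castLE hKN i) j * x j
            = (B ω).mulVec x (Fin.castLE hKN i) := rfl
        rw [hsum, hx]
        ring
    -- now the deterministic argument on the good event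
    filter_upwards [measure_eq_zero_iff_ae_notMem.mp hbadnull] with ω hω
    have hgood : ¬ ∃ x : Fin K → ℝ, (B ω).mulVec x = fun _ => (1 : ℝ) := by simpa using hω
    obtain ⟨n, hn⟩ := Nat.exists_eq_succ_of_ne_zero (show N ≠ 0 by omega)
    subst hn
    set σ : Equiv.Perm (Fin (n + 1)) := finRotate (n + 1) with hσdef
    -- a nonzero solution of B x = Π B y
    set L : ((Fin K → ℝ) × (Fin K → ℝ)) →ₗ[ℝ] (Fin (n + 1) → ℝ) :=
      ((B ω).mulVecLin.comp (LinearMap.fst ℝ _ _))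
        - (((σ.permMatrix ℝ) * B ω).mulVecLin.comp (LinearMap.snd ℝ _ _)) with hLdef
    have hnotinj : ¬ Function.Injective L := by
      intro hinj
      have := LinearMap.finrank_le_finrank_of_injective hinj
      simp only [Module.finrank_prod, Module.finrank_fin_fun] at this
      omega
    rw [Function.not_injective_iff] at hnotinj
    obtain ⟨u, u', huu, hne⟩ := hnotinj
    have hz : L (u - u') = 0 := by rw [map_sub, huu, sub_self]
    set a : Fin K → ℝ := u.1 - u'.1 with hadef
    set b : Fin K → ℝ := u.2 - u'.2 with hbdef
    have hab : (B ω).mulVec a = (σ.permMatrix ℝ).mulVec ((B ω).mulVec b) := by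
      have : (B ω).mulVecLin (u.1 - u'.1)
          - ((σ.permMatrix ℝ) * B ω).mulVecLin (u.2 - u'.2) = 0 := by
        simpa [hLdef, LinearMap.sub_apply] using hz
      have h2 := sub_eq_zero.mp this
      rw [Matrix.mulVecLin_apply, Matrix.mulVecLin_apply] at h2
      rw [h2, ← Matrix.mulVec_mulVec]
    by_cases hab' : a = b
    · -- then B a is a fixed vector of the rotation, hence constant
      have hab2 : (B ω).mulVec a = (σ.permMatrix ℝ).mulVec ((B ω).mulVec a) := by
        rw [← hab'] at hab; exact hab
      have ha0 : a ≠ 0 := by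
        intro h
        apply hne
        have h1 : u.1 = u'.1 := sub_eq_zero.mp (by rw [← hadef]; exact h)
        have h2 : u.2 = u'.2 := sub_eq_zero.mp (by rw [← hbdef, ← hab']; exact h)
        exact Prod.ext h1 h2
      set v : Fin (n + 1) → ℝ := (B ω).mulVec a with hvdef
      have hab3 : ∀ i, v i = v (σ i) := by
        intro i
        have h := congrFun hab2 i
        rw [_root_.permMatrix_mulVec] at h
        exact h
      have hvshift : ∀ i : Fin (n + 1), v i = v (i + 1) := by
        intro i
        simpa [hσdef, finRotate_succ_apply] using hab3 i
      have hvconst : ∀ i : Fin (n + 1), v i = v 0 := by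
        intro i
        induction i using Fin.induction with
        | zero => rfl
        | succ j ihj =>
          rw [← Fin.coeSucc_eq_succ, ← hvshift j.castSucc, ihj]
      by_cases hc : v 0 = 0
      · -- B a = 0, kernel case
        refine hker_case (B ω) a ha0 ?_
        funext i
        show v i = 0
        rw [hvconst i, hc]
      · -- B (a / c) = 1, contradicting the good event
        exfalso
        apply hgood
        refine ⟨(v 0)⁻¹ • a, ?_⟩
        funext i
        rw [Matrix.mulVec_smul]
        show (v 0)⁻¹ * v i = 1
        rw [hvconst i]
        field_simp
    · exact ⟨σ, a, b, hab', hab⟩
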